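/- arXiv:2209.06284 — 2 statements merged into one kernel-verified Lean document; each statement's English description precedes it below -/
import Mathlib

section
/- Let $E\subset\mathbb{R}^n$ be weakly porous with constants $0<c,\delta<1$. If $Q\subset R$ are cubes such that $E\cap Q\neq\emptyset$ and $|\mathcal{M}(Q)|<4^{-n}\delta|\mathcal{M}(R)|$, then $|Q|\le(1-2^{-n}c)|R|$. -/
open MeasureTheory Metric Set

noncomputable section

/-- An axis-parallel half-open cube in `ℝⁿ`, given by its lower corner and side length. -/
structure Cube (n : ℕ) where
  a : EuclideanSpace ℝ (Fin n)
  l : ℝ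
  pos : 0 < l

/-- The set of points of a cube. -/
def Cube.set {n : ℕ} (P : Cube n) : Set (EuclideanSpace ℝ (Fin n)) :=
  {x | ∀ i, P.a i ≤ x i ∧ x i < P.a i + P.l}

/-- A weight: locally integrable and a.e. positive. -/
def IsWeight {n : ℕ} (w : EuclideanSpace ℝ (Fin n) → ℝ) : Prop :=
  LocallyIntegrable w volume ∧ ∀ᵐ x ∂(volume : Measure (EuclideanSpace ℝ (Fin n))), 0 < w x

/-- The `A₁` inequality with constant `C`, over all axis-parallel cubes. -/
def A1With {n : ℕ} (w : EuclideanSpace ℝ (Fin n) → ℝ) (C : ℝ) : Prop :=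
  ∀ P : Cube n, (⨍ x in P.set, w x) ≤ C * essInf w (volume.restrict P.set)

/-- Membership in the Muckenhoupt class `A₁`. -/
def MemA1 {n : ℕ} (w : EuclideanSpace ℝ (Fin n) → ℝ) : Prop :=
  IsWeight w ∧ ∃ C : ℝ, A1With w C

/-- The `A_p` inequality with constant `C`, over all axis-parallel cubes. -/
def ApWith {n : ℕ} (w : EuclideanSpace ℝ (Fin n) → ℝ) (p C : ℝ) : Prop :=
  ∀ P : Cube n,
    (⨍ x in P.set, w x) * (⨍ x in P.set, w x ^ (1 / (1 - p))) ^ (p - 1) ≤ C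

/-- Membership in the Muckenhoupt class `A_p`. -/
def MemAp {n : ℕ} (w : EuclideanSpace ℝ (Fin n) → ℝ) (p : ℝ) : Prop :=
  IsWeight w ∧ ∃ C : ℝ, ApWith w p C

/-- `Q` is a dyadic subcube of `P`. -/
def IsDyadicSubcube {n : ℕ} (P Q : Cube n) : Prop :=
  ∃ (j : ℕ) (k : Fin n → ℕ), (∀ i, k i < 2 ^ j) ∧
    Q.l = P.l / 2 ^ j ∧ ∀ i, Q.a i = P.a i + P.l * k i / 2 ^ j

/-- A cube is `E`-free if it does not meet `E`. -/
def EFree {n : ℕ} (E : Set (EuclideanSpace ℝ (Fin n))) (Q : Cube n) : Prop :=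
  Q.set ∩ E = ∅

/-- The measure `|𝓜(P)|` of a largest `E`-free dyadic subcube of `P`
(`0` if there is none). -/
def maxFree {n : ℕ} (E : Set (EuclideanSpace ℝ (Fin n))) (P : Cube n) : ℝ :=
  sSup {v : ℝ | ∃ Q : Cube n, IsDyadicSubcube P Q ∧ EFree E Q ∧ v = (volume Q.set).toReal}

/-- Weak porosity with constants `c`, `δ`. -/
def WeaklyPorousWith {n : ℕ} (E : Set (EuclideanSpace ℝ (Fin n))) (c δ : ℝ) : Prop :=
  ∀ P : Cube n, ∃ (N : ℕ) (Q : Fin N → Cube n),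
    (∀ k, IsDyadicSubcube P (Q k) ∧ EFree E (Q k)) ∧
    (∀ k m, k ≠ m → Disjoint (Q k).set (Q m).set) ∧
    (∀ k, δ * maxFree E P ≤ (volume (Q k).set).toReal) ∧
    c * (volume P.set).toReal ≤ ∑ k, (volume (Q k).set).toReal

/-- A set is weakly porous if it is weakly porous with some constants `0 < c, δ < 1`. -/
def WeaklyPorous {n : ℕ} (E : Set (EuclideanSpace ℝ (Fin n))) : Prop :=
  ∃ c δ : ℝ, 0 < c ∧ c < 1 ∧ 0 < δ ∧ δ < 1 ∧ WeaklyPorousWith E c δ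

/-- Porosity. -/
def Porous {n : ℕ} (E : Set (EuclideanSpace ℝ (Fin n))) : Prop :=
  ∃ c : ℝ, 0 < c ∧ ∀ (x : EuclideanSpace ℝ (Fin n)) (r : ℝ), 0 < r →
    ∃ y : EuclideanSpace ℝ (Fin n), ball y (c * r) ⊆ ball x r \ E

/-- The distance weight `dist(·,E)^{-α}`. -/
def distw {n : ℕ} (E : Set (EuclideanSpace ℝ (Fin n))) (α : ℝ)
    (x : EuclideanSpace ℝ (Fin n)) : ℝ :=
  infDist x E ^ (-α)

/-- `h_E(B(x,R))`: the supremum of radii `t` of balls contained in `B(x,R) \ E`. -/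
def hFree {n : ℕ} (E : Set (EuclideanSpace ℝ (Fin n))) (x : EuclideanSpace ℝ (Fin n))
    (R : ℝ) : ℝ :=
  sSup {t : ℝ | ∃ y ∈ ball x R, ball y t ⊆ ball x R \ E}

/-- The set of admissible exponents in the definition of the Muckenhoupt exponent. -/
def MuckSet {n : ℕ} (E : Set (EuclideanSpace ℝ (Fin n))) : Set ℝ :=
  {α : ℝ | ∃ C : ℝ, ∀ x ∈ E, ∀ R r : ℝ, 0 < r → r < hFree E x R → hFree E x R ≤ R →
    (volume (thickening r E ∩ ball x R)).toReal ≤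
      C * (hFree E x R / r) ^ (-α) * (volume (ball x R)).toReal}

open scoped Classical in
/-- The Muckenhoupt exponent of `E`. -/
def MuckExp {n : ℕ} (E : Set (EuclideanSpace ℝ (Fin n))) : ℝ :=
  if ∀ x ∈ E, ∀ R : ℝ, 0 < R → 0 < hFree E x R then sSup (MuckSet E) else 0

end

section AuxLemmas

-- helpers
variable {n : ℕ}

def boxSet (a b : Fin n → ℝ) : Set (EuclideanSpace ℝ (Fin n)) :=
  {x | ∀ i, a i ≤ x i ∧ x i < b i}

lemma boxSet_eq (a b : Fin n → ℝ) :
    boxSet a b = (MeasurableEquiv.toLp 2 (Fin n → ℝ)).symm ⁻¹' (Set.univ.pi fun i => Ico (a i) (b i)) := by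
  ext x
  simp [boxSet, Set.mem_pi]

lemma volume_boxSet (a b : Fin n → ℝ) :
    volume (boxSet a b) = ∏ i, ENNReal.ofReal (b i - a i) := by
  rw [boxSet_eq, (EuclideanSpace.volume_preserving_symm_measurableEquiv_toLp (Fin n)).measure_preimage
    ((MeasurableSet.univ_pi fun i => measurableSet_Ico).nullMeasurableSet)]
  rw [volume_pi_pi]
  simp [Real.volume_Ico]

lemma measurable_boxSet (a b : Fin n → ℝ) : MeasurableSet (boxSet a b) := by
  rw [boxSet_eq]
  exact (MeasurableEquiv.toLp 2 (Fin n → ℝ)).symm.measurable (MeasurableSet.univ_pi fun i => measurableSet_Ico)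

lemma cube_set_eq (P : Cube n) : P.set = boxSet P.a (fun i => P.a i + P.l) := rfl

lemma measurable_cube (P : Cube n) : MeasurableSet P.set := by
  rw [cube_set_eq]; exact measurable_boxSet _ _

lemma volume_cube (P : Cube n) : volume P.set = ENNReal.ofReal (P.l ^ n) := by
  rw [cube_set_eq, volume_boxSet]
  simp only [add_sub_cancel_left]
  rw [Finset.prod_const, Finset.card_univ, Fintype.card_fin,
    ← ENNReal.ofReal_pow P.pos.le]

lemma toReal_volume_cube (P : Cube n) : (volume P.set).toReal = P.l ^ n := by
  rw [volume_cube, ENNReal.toReal_ofReal (pow_nonneg P.pos.le n)]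

lemma volume_cube_ne_top (P : Cube n) : volume P.set ≠ ⊤ := by
  rw [volume_cube]; exact ENNReal.ofReal_ne_top

lemma dyadic_subset {P D : Cube n} (h : IsDyadicSubcube P D) : D.set ⊆ P.set := by
  obtain ⟨j, k, hk, hl, ha⟩ := h
  intro x hx i
  have hx' := hx i
  rw [ha i, hl] at hx'
  have h2 : (0:ℝ) < 2 ^ j := by positivity
  constructor
  · refine le_trans ?_ hx'.1
    have : (0:ℝ) ≤ P.l * k i / 2 ^ j := by
      have := P.pos
      positivity
    linarith
  · refine lt_of_lt_of_le hx'.2 ?_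
    have hk' : (k i : ℝ) + 1 ≤ 2 ^ j := by
      have := hk i
      exact_mod_cast Nat.succ_le_of_lt this
    have : P.l * k i / 2 ^ j + P.l / 2 ^ j = P.l * ((k i : ℝ) + 1) / 2 ^ j := by ring
    rw [add_assoc, this]
    have : P.l * ((k i : ℝ) + 1) / 2 ^ j ≤ P.l := by
      rw [div_le_iff₀ h2]
      nlinarith [P.pos]
    linarith

lemma le_maxFree {E : Set (EuclideanSpace ℝ (Fin n))} {P D : Cube n}
    (hsub : IsDyadicSubcube P D) (hfree : EFree E D) :
    (volume D.set).toReal ≤ maxFree E P := by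
  apply le_csSup
  · refine ⟨P.l ^ n, ?_⟩
    rintro v ⟨D', ⟨j, k, hk, hl, ha⟩, _, rfl⟩
    rw [toReal_volume_cube, hl]
    have hp := P.pos
    apply pow_le_pow_left₀ (by positivity)
    have h1 : (1:ℝ) ≤ 2 ^ j := one_le_pow₀ (by norm_num)
    rw [div_le_iff₀ (by positivity)]
    nlinarith [P.pos]
  · exact ⟨D, hsub, hfree, rfl⟩

lemma inter_small {E : Set (EuclideanSpace ℝ (Fin n))} (hn : 0 < n)
    {Q K : Cube n} (hfree : EFree E K)
    (hvol : maxFree E Q < K.l ^ n / 4 ^ n) :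
    (volume (K.set ∩ Q.set)).toReal ≤ K.l ^ n / 2 := by
  have hL : 0 < K.l := K.pos
  have hinter : K.set ∩ Q.set =
      boxSet (fun i => max (K.a i) (Q.a i)) (fun i => min (K.a i + K.l) (Q.a i + Q.l)) := by
    ext x
    simp only [Set.mem_inter_iff, Cube.set, boxSet, mem_setOf_eq, max_le_iff, lt_min_iff,
      ← forall_and]
    constructor
    · intro h i; exact ⟨⟨(h i).1.1, (h i).2.1⟩, (h i).1.2, (h i).2.2⟩
    · intro h i; exact ⟨⟨(h i).1.1, (h i).2.1⟩, (h i).1.2, (h i).2.2⟩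
  by_cases hcase : ∀ i, K.l / 2 < min (K.a i + K.l) (Q.a i + Q.l) - max (K.a i) (Q.a i)
  · -- contradiction
    exfalso
    have hi0 : Nonempty (Fin n) := ⟨⟨0, hn⟩⟩
    obtain ⟨i0⟩ := hi0
    have hQl : K.l / 2 < Q.l := by
      have h1 := hcase i0
      have h2 := le_max_right (K.a i0) (Q.a i0)
      have h3 := min_le_right (K.a i0 + K.l) (Q.a i0 + Q.l)
      linarith
    have hex : ∃ j : ℕ, Q.l / 2 ^ j ≤ K.l / 2 := by
      obtain ⟨j, hj⟩ := exists_nat_gt (Q.l / (K.l / 2))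
      refine ⟨j, ?_⟩
      have h2 : (j : ℝ) < 2 ^ j := by exact_mod_cast Nat.lt_two_pow_self
      have h4 : Q.l / (K.l / 2) < 2 ^ j := lt_trans hj h2
      rw [div_le_iff₀ (by positivity)]
      rw [div_lt_iff₀ (by positivity)] at h4
      linarith
    classical
    set j := Nat.find hex with hjdef
    have hspec : Q.l / 2 ^ j ≤ K.l / 2 := Nat.find_spec hex
    have hj0 : j ≠ 0 := by
      intro h0
      rw [h0] at hspec
      simp at hspec
      linarith
    set h := Q.l / 2 ^ j with hhdef
    have hpos : 0 < h := by have := Q.pos; positivity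
    have hh4 : K.l / 4 < h := by
      have hmin := Nat.find_min hex (Nat.pred_lt hj0)
      push_neg at hmin
      rw [Nat.pred_eq_sub_one, ← hjdef] at hmin
      have hjj : j - 1 + 1 = j := Nat.succ_pred_eq_of_ne_zero hj0
      have hq : Q.l / 2 ^ (j - 1) = 2 * h := by
        have h2p : (2:ℝ) ^ j = 2 ^ (j - 1) * 2 := by rw [← pow_succ, hjj]
        rw [hhdef, h2p]
        field_simp
      rw [hq] at hmin
      linarith
    set kk : Fin n → ℕ := fun i => ⌈(K.a i - Q.a i) / h⌉₊ with hkkdef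
    have h2j : (2:ℝ) ^ j * h = Q.l := by
      rw [hhdef]; field_simp
    have hkey : ∀ i, kk i < 2 ^ j ∧ K.a i ≤ Q.a i + Q.l * kk i / 2 ^ j ∧
        Q.a i + Q.l * kk i / 2 ^ j + h ≤ min (K.a i + K.l) (Q.a i + Q.l) := by
      intro i
      have hs := hcase i
      have ht : Q.l * kk i / 2 ^ j = kk i * h := by rw [hhdef]; ring
      have hd1 : K.a i - Q.a i ≤ kk i * h := by
        have h1 : (K.a i - Q.a i) / h ≤ kk i := Nat.le_ceil _
        rw [div_le_iff₀ hpos] at h1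
        exact h1
      have hklt : kk i < 2 ^ j := by
        rcases le_or_gt (K.a i - Q.a i) 0 with hd | hd
        · have : kk i = 0 := by
            rw [hkkdef]
            simp only []
            rw [Nat.ceil_eq_zero]
            exact div_nonpos_of_nonpos_of_nonneg hd hpos.le
          rw [this]; positivity
        · -- max = K.a i side
          have hmax : max (K.a i) (Q.a i) = K.a i := max_eq_left (by linarith)
          have hmin2 : min (K.a i + K.l) (Q.a i + Q.l) ≤ Q.a i + Q.l := min_le_right _ _
          have hdd : K.a i - Q.a i < Q.l - h := by
            rw [hmax] at hs
            linarith [hh4, hspec]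
          have hcast : ((2 ^ j - 1 : ℕ) : ℝ) = 2 ^ j - 1 := by
            have : (1:ℕ) ≤ 2 ^ j := Nat.one_le_two_pow
            push_cast [Nat.cast_sub this]
            ring
          have : kk i ≤ 2 ^ j - 1 := by
            rw [hkkdef]
            apply Nat.ceil_le.mpr
            rw [hcast, div_le_iff₀ hpos]
            have : ((2:ℝ) ^ j - 1) * h = Q.l - h := by
              rw [← h2j]; ring
            rw [this]
            linarith
          have h1 : 1 ≤ 2 ^ j := Nat.one_le_two_pow
          omega
      refine ⟨hklt, ?_, ?_⟩
      · rw [ht]; linarith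
      · rw [ht, le_min_iff]
        constructor
        · rcases le_or_gt (K.a i - Q.a i) 0 with hd | hd
          · have hk0 : kk i = 0 := by
              rw [hkkdef]
              simp only []
              rw [Nat.ceil_eq_zero]
              exact div_nonpos_of_nonpos_of_nonneg hd hpos.le
            rw [hk0]
            have hmax : max (K.a i) (Q.a i) = Q.a i := max_eq_right (by linarith)
            have hmin2 : min (K.a i + K.l) (Q.a i + Q.l) ≤ K.a i + K.l := min_le_left _ _
            rw [hmax] at hs
            push_cast
            linarith
          · have hup : (kk i : ℝ) < (K.a i - Q.a i) / h + 1 :=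
              Nat.ceil_lt_add_one (le_of_lt (div_pos hd hpos))
            have h1 : (kk i : ℝ) * h < ((K.a i - Q.a i) / h + 1) * h :=
              mul_lt_mul_of_pos_right hup hpos
            have h2 : ((K.a i - Q.a i) / h + 1) * h = (K.a i - Q.a i) + h := by
              field_simp
            linarith
        · have hk1 : (kk i : ℝ) + 1 ≤ 2 ^ j := by
            have := hklt
            exact_mod_cast Nat.succ_le_of_lt this
          have : ((kk i : ℝ) + 1) * h ≤ 2 ^ j * h := by
            apply mul_le_mul_of_nonneg_right hk1 hpos.le
          rw [h2j] at this
          linarith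
    set D : Cube n := ⟨WithLp.toLp 2 fun i => Q.a i + Q.l * kk i / 2 ^ j, h, hpos⟩ with hDdef
    have hDsub : IsDyadicSubcube Q D := ⟨j, kk, fun i => (hkey i).1, rfl, fun i => rfl⟩
    have hDK : D.set ⊆ K.set := by
      intro x hx i
      have hxi := hx i
      have hk := hkey i
      simp only [hDdef, Cube.set, mem_setOf_eq] at hxi
      have hminle : min (K.a i + K.l) (Q.a i + Q.l) ≤ K.a i + K.l := min_le_left _ _
      exact ⟨le_trans hk.2.1 hxi.1, by linarith [hxi.2, hk.2.2]⟩
    have hDfree : EFree E D := by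
      rw [EFree, ← subset_empty_iff]
      rw [EFree] at hfree
      rw [← hfree]
      exact inter_subset_inter_left _ hDK
    have hle := le_maxFree hDsub hDfree
    rw [toReal_volume_cube] at hle
    have hlt : (K.l / 4) ^ n < h ^ n := by
      apply pow_lt_pow_left₀ hh4 (by positivity) hn.ne'
    have : (K.l / 4) ^ n = K.l ^ n / 4 ^ n := div_pow _ _ _
    simp only [hDdef] at hle
    linarith
  · push_neg at hcase
    obtain ⟨i0, hi0⟩ := hcase
    rw [hinter, volume_boxSet]
    have hbound : ∀ i, ENNReal.ofReal (min (K.a i + K.l) (Q.a i + Q.l) - max (K.a i) (Q.a i))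
        ≤ ENNReal.ofReal K.l := by
      intro i
      apply ENNReal.ofReal_le_ofReal
      have h2 := le_max_left (K.a i) (Q.a i)
      have h3 := min_le_left (K.a i + K.l) (Q.a i + Q.l)
      linarith
    calc (∏ i, ENNReal.ofReal (min (K.a i + K.l) (Q.a i + Q.l) - max (K.a i) (Q.a i))).toReal
        ≤ (ENNReal.ofReal (K.l / 2) * ∏ i ∈ Finset.univ.erase i0, ENNReal.ofReal K.l).toReal := by
          apply ENNReal.toReal_mono
          · refine ENNReal.mul_ne_top ENNReal.ofReal_ne_top ?_
            exact (ENNReal.prod_lt_top (fun i _ => ENNReal.ofReal_lt_top)).ne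
          · rw [← Finset.mul_prod_erase _ _ (Finset.mem_univ i0)]
            exact mul_le_mul' (ENNReal.ofReal_le_ofReal hi0)
              (Finset.prod_le_prod' fun i _ => hbound i)
      _ ≤ K.l ^ n / 2 := by
          rw [Finset.prod_const]
          have hcard : (Finset.univ.erase i0).card = n - 1 := by
            rw [Finset.card_erase_of_mem (Finset.mem_univ i0)]
            simp
          rw [hcard, ← ENNReal.ofReal_pow hL.le, ← ENNReal.ofReal_mul (by positivity)]
          rw [ENNReal.toReal_ofReal (by positivity)]
          have : K.l / 2 * K.l ^ (n - 1) = K.l ^ n / 2 := by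
            have : K.l ^ n = K.l * K.l ^ (n - 1) := by
              rw [← pow_succ']
              congr 1
              omega
            rw [this]; ring
          linarith [this.le]

end AuxLemmas

/-- If `E` is weakly porous with constants `c, δ`, `Q ⊆ R` are cubes,
`E ∩ Q ≠ ∅` and `|𝓜(Q)| < 4^{-n} δ |𝓜(R)|`, then `|Q| ≤ (1 - 2^{-n} c) |R|`. -/
theorem weaklyPorous_measure_drop {n : ℕ} (E : Set (EuclideanSpace ℝ (Fin n)))
    (c δ : ℝ) (hc0 : 0 < c) (hc1 : c < 1) (hδ0 : 0 < δ) (hδ1 : δ < 1)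
    (hwp : WeaklyPorousWith E c δ) (Q R : Cube n) (hQR : Q.set ⊆ R.set)
    (hmeet : (E ∩ Q.set).Nonempty)
    (hM : maxFree E Q < δ * maxFree E R / 4 ^ n) :
    (volume Q.set).toReal ≤ (1 - c / 2 ^ n) * (volume R.set).toReal := by
  rcases Nat.eq_zero_or_pos n with hn | hn
  · -- n = 0 : contradiction from hM
    exfalso
    subst hn
    have hEne : E.Nonempty := hmeet.mono inter_subset_left |>.mono (by simp)
    have hzero : ∀ P : Cube 0, maxFree E P = 0 := by
      intro P
      have : {v : ℝ | ∃ D : Cube 0, IsDyadicSubcube P D ∧ EFree E D ∧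
          v = (volume D.set).toReal} = ∅ := by
        rw [eq_empty_iff_forall_notMem]
        rintro v ⟨D, _, hfree, _⟩
        have hDuniv : D.set = univ := eq_univ_of_forall fun x i => i.elim0
        rw [EFree, hDuniv, univ_inter] at hfree
        exact hEne.ne_empty hfree
      rw [maxFree, this, Real.sSup_empty]
    rw [hzero Q, hzero R] at hM
    simp at hM
  obtain ⟨N, K, hKprop, hKdisj, hKbig, hKsum⟩ := hwp R
  have hvolK : ∀ k, maxFree E Q < (K k).l ^ n / 4 ^ n := by
    intro k
    refine lt_of_lt_of_le hM ?_
    have hb := hKbig k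
    rw [toReal_volume_cube] at hb
    gcongr
  have hhalf : ∀ k, (volume ((K k).set ∩ Q.set)).toReal ≤ (K k).l ^ n / 2 :=
    fun k => inter_small hn (hKprop k).2 (hvolK k)
  have hfinK : ∀ k, volume ((K k).set ∩ Q.set) ≠ ⊤ :=
    fun k => (lt_of_le_of_lt (measure_mono inter_subset_left)
      (volume_cube_ne_top (K k)).lt_top).ne
  have hfinD : ∀ k, volume ((K k).set \ Q.set) ≠ ⊤ :=
    fun k => (lt_of_le_of_lt (measure_mono diff_subset)
      (volume_cube_ne_top (K k)).lt_top).ne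
  have hdiff : ∀ k, (K k).l ^ n / 2 ≤ (volume ((K k).set \ Q.set)).toReal := by
    intro k
    have heq := measure_inter_add_diff (μ := (volume : Measure (EuclideanSpace ℝ (Fin n)))) (K k).set (measurable_cube Q)
    have := congrArg ENNReal.toReal heq
    rw [ENNReal.toReal_add (hfinK k) (hfinD k), toReal_volume_cube] at this
    linarith [hhalf k]
  have hsum : volume Q.set + ∑ k, volume ((K k).set \ Q.set) ≤ volume R.set := by
    have hmeas : ∀ k : Fin N, MeasurableSet ((K k).set \ Q.set) :=
      fun k => (measurable_cube (K k)).diff (measurable_cube Q)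
    have hdisj' : Pairwise fun k m : Fin N => Disjoint ((K k).set \ Q.set) ((K m).set \ Q.set) :=
      fun k m hkm => ((hKdisj k m hkm).mono diff_subset diff_subset)
    calc volume Q.set + ∑ k, volume ((K k).set \ Q.set)
        = volume Q.set + volume (⋃ k, (K k).set \ Q.set) := by
          rw [measure_iUnion hdisj' hmeas, tsum_fintype]
      _ = volume (Q.set ∪ ⋃ k, (K k).set \ Q.set) := by
          rw [measure_union ?_ (MeasurableSet.iUnion hmeas)]
          exact disjoint_iUnion_right.mpr fun k => disjoint_sdiff_self_right
      _ ≤ volume R.set := by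
          apply measure_mono
          apply union_subset hQR
          exact iUnion_subset fun k => diff_subset.trans (dyadic_subset (hKprop k).1)
  -- convert to real
  have hreal : (volume Q.set).toReal + ∑ k, (volume ((K k).set \ Q.set)).toReal
      ≤ (volume R.set).toReal := by
    have h1 : ((volume Q.set) + ∑ k, volume ((K k).set \ Q.set)).toReal
        ≤ (volume R.set).toReal := ENNReal.toReal_mono (volume_cube_ne_top R) hsum
    rwa [ENNReal.toReal_add (volume_cube_ne_top Q)
      (ENNReal.sum_ne_top.mpr fun k _ => hfinD k),
      ENNReal.toReal_sum (fun k _ => hfinD k)] at h1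
  have hsum2 : c * (volume R.set).toReal / 2 ≤ ∑ k, (volume ((K k).set \ Q.set)).toReal := by
    calc c * (volume R.set).toReal / 2 ≤ (∑ k, (volume (K k).set).toReal) / 2 := by linarith
      _ = ∑ k, (volume (K k).set).toReal / 2 := by rw [Finset.sum_div]
      _ ≤ ∑ k, (volume ((K k).set \ Q.set)).toReal := by
          apply Finset.sum_le_sum
          intro k _
          rw [toReal_volume_cube]
          exact hdiff k
  have h2n : (2:ℝ) ≤ 2 ^ n := by
    calc (2:ℝ) = 2 ^ 1 := (pow_one 2).symm
      _ ≤ 2 ^ n := pow_le_pow_right₀ one_le_two hn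
  have hr0 : 0 ≤ (volume R.set).toReal := ENNReal.toReal_nonneg
  have hcr : c * (volume R.set).toReal / 2 ^ n ≤ c * (volume R.set).toReal / 2 := by
    apply div_le_div_of_nonneg_left (by positivity) (by norm_num) h2n
  have hfin : (1 - c / 2 ^ n) * (volume R.set).toReal
      = (volume R.set).toReal - c * (volume R.set).toReal / 2 ^ n := by ring
  rw [hfin]
  linarith
end

section
/- If $E\subset\mathbb{R}^n$ is bounded, weakly porous and $0<\alpha<\Mu(E)$, then for every $x\in E$ and $R>0$ the upper Minkowski dimension of $E\cap B(x,R)$ is at most $n-\alpha$; in particular $\overline{\dim}_M(E\cap B(x,R))\le n-\Mu(E)<n$. -/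
open MeasureTheory Metric Set

/-- The upper Minkowski dimension of a bounded set, defined through the measure of
its `r`-neighborhoods. -/
noncomputable def upperMinkDim {n : ℕ} (A : Set (EuclideanSpace ℝ (Fin n))) : ℝ :=
  sInf {l : ℝ | 0 ≤ l ∧ ∃ C : ℝ, ∀ r : ℝ, 0 < r → r < diam A →
    (volume (thickening r A)).toReal ≤ C * r ^ ((n : ℝ) - l)}

section Aux

variable {n : ℕ} {E : Set (EuclideanSpace ℝ (Fin n))}

lemma zero_mem_hFreeSet {x : EuclideanSpace ℝ (Fin n)} {R : ℝ} (hR : 0 < R) :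
    (0 : ℝ) ∈ {t : ℝ | ∃ y ∈ ball x R, ball y t ⊆ ball x R \ E} :=
  ⟨x, mem_ball_self hR, by simp⟩

lemma hFreeSet_le {x : EuclideanSpace ℝ (Fin n)} (hx : x ∈ E) {R t : ℝ}
    (ht : t ∈ {t : ℝ | ∃ y ∈ ball x R, ball y t ⊆ ball x R \ E}) : t ≤ R := by
  by_contra h
  push_neg at h
  obtain ⟨y, hy, hsub⟩ := ht
  have hxy : x ∈ ball y t := by
    rw [mem_ball, dist_comm]
    exact lt_trans (mem_ball.mp hy) h
  exact (hsub hxy).2 hx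

lemma hFree_le {x : EuclideanSpace ℝ (Fin n)} (hx : x ∈ E) {R : ℝ} (hR : 0 < R) :
    hFree E x R ≤ R :=
  csSup_le ⟨0, zero_mem_hFreeSet hR⟩ fun _ ht => hFreeSet_le hx ht

lemma hFree_mono {x : EuclideanSpace ℝ (Fin n)} (hx : x ∈ E) {R R' : ℝ} (hR : 0 < R)
    (hRR' : R ≤ R') : hFree E x R ≤ hFree E x R' := by
  apply csSup_le_csSup ⟨R', fun t ht => hFreeSet_le hx ht⟩ ⟨0, zero_mem_hFreeSet hR⟩
  rintro t ⟨y, hy, hsub⟩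
  exact ⟨y, ball_subset_ball hRR' hy,
    hsub.trans (diff_subset_diff_left (ball_subset_ball hRR'))⟩

lemma zero_mem_MuckSet : (0 : ℝ) ∈ MuckSet E := by
  refine ⟨1, fun x hx R r hr hrh hhR => ?_⟩
  rw [neg_zero, Real.rpow_zero, mul_one, one_mul]
  exact ENNReal.toReal_mono (measure_ball_lt_top).ne (measure_mono inter_subset_right)

lemma div_rpow_neg_eq {a r β : ℝ} (ha : 0 < a) (hr : 0 < r) :
    (a / r) ^ (-β) = a ^ (-β) * r ^ β := by
  rw [Real.div_rpow ha.le hr.le, Real.rpow_neg hr.le]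
  rw [div_eq_mul_inv, inv_inv]

/-- Any positive member of the Muckenhoupt set is at most `n`, provided `E` has a point
with a free ball inside the unit ball around it. -/
lemma MuckSet_le_dim {x : EuclideanSpace ℝ (Fin n)} (hx : x ∈ E)
    (hh : 0 < hFree E x 1) {β : ℝ} (hβ : 0 < β) (hβmem : β ∈ MuckSet E) : β ≤ n := by
  by_contra hlt
  push_neg at hlt
  obtain ⟨C, hC⟩ := hβmem
  set h : ℝ := hFree E x 1 with hh'
  have hle1 : h ≤ 1 := hFree_le hx one_pos
  set v1 : ℝ := (volume (ball (0 : EuclideanSpace ℝ (Fin n)) 1)).toReal with hv1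
  have hv1pos : 0 < v1 :=
    ENNReal.toReal_pos (measure_ball_pos volume 0 one_pos).ne' measure_ball_lt_top.ne
  set V : ℝ := (volume (ball x 1)).toReal with hV
  set K : ℝ := C * h ^ (-β) * V with hK
  -- main inequality for all small r
  have main : ∀ r : ℝ, 0 < r → r < h → v1 ≤ K * r ^ (β - (n : ℝ)) := by
    intro r hr hrh
    have h1 : (volume (thickening r E ∩ ball x 1)).toReal ≤
        C * (h / r) ^ (-β) * V := hC x hx 1 r hr hrh hle1
    have hsub : ball x r ⊆ thickening r E ∩ ball x 1 := by
      intro z hz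
      refine ⟨mem_thickening_iff.mpr ⟨x, hx, hz⟩, ?_⟩
      exact ball_subset_ball (hrh.le.trans hle1) hz
    have hballvol : (volume (ball x r)).toReal = r ^ n * v1 := by
      rw [Measure.addHaar_ball_of_pos volume x hr, finrank_euclideanSpace_fin,
        ENNReal.toReal_mul, ENNReal.toReal_ofReal (pow_nonneg hr.le n)]
    have h2 : (volume (ball x r)).toReal ≤ (volume (thickening r E ∩ ball x 1)).toReal := by
      refine ENNReal.toReal_mono ?_ (measure_mono hsub)
      exact ((measure_mono inter_subset_right).trans_lt measure_ball_lt_top).ne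
    have h3 : r ^ n * v1 ≤ K * r ^ β := by
      rw [← hballvol]
      calc (volume (ball x r)).toReal ≤ C * (h / r) ^ (-β) * V := h2.trans h1
        _ = K * r ^ β := by rw [div_rpow_neg_eq hh hr]; ring
    have hrpow : r ^ β = r ^ (n : ℝ) * r ^ (β - (n : ℝ)) := by
      rw [← Real.rpow_add hr]; ring_nf
    have hrn : r ^ (n : ℝ) = r ^ n := Real.rpow_natCast r n
    have hrnpos : (0 : ℝ) < r ^ n := pow_pos hr n
    rw [hrpow, hrn] at h3
    have := le_of_mul_le_mul_left (by linarith [h3] : r ^ n * v1 ≤ r ^ n * (K * r ^ (β - (n : ℝ)))) hrnpos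
    linarith
  -- choose a small r to get a contradiction
  set e : ℝ := β - (n : ℝ) with he
  have hepos : 0 < e := by simp only [he]; linarith
  set K' : ℝ := |K| + 1 with hK'
  have hK'pos : 0 < K' := by positivity
  set a : ℝ := (v1 / (2 * K')) ^ e⁻¹ with ha
  have hapos : 0 < a := Real.rpow_pos_of_pos (by positivity) _
  set r : ℝ := min (h / 2) a with hr'
  have hrpos : 0 < r := lt_min (by linarith) hapos
  have hrh : r < h := (min_le_left _ _).trans_lt (by linarith)
  have hre : r ^ e ≤ v1 / (2 * K') := by
    calc r ^ e ≤ a ^ e := Real.rpow_le_rpow hrpos.le (min_le_right _ _) hepos.le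
      _ = v1 / (2 * K') := Real.rpow_inv_rpow (by positivity) hepos.ne'
  have hrepos : 0 < r ^ e := Real.rpow_pos_of_pos hrpos _
  have hKK' : K ≤ K' := by
    have := le_abs_self K; linarith
  have : K * r ^ e ≤ K' * r ^ e := by nlinarith
  have hfin : K * r ^ e ≤ v1 / 2 := by
    calc K * r ^ e ≤ K' * r ^ e := this
      _ ≤ K' * (v1 / (2 * K')) := by nlinarith
      _ = v1 / 2 := by field_simp
  have := main r hrpos hrh
  linarith

/-- The key membership lemma: `n - β` belongs to the defining set of the upper
Minkowski dimension of `E ∩ B(x,R)`. -/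
lemma key_mem {β C : ℝ} (hβ : 0 < β) (hβn : β ≤ n)
    (hC : ∀ x ∈ E, ∀ R r : ℝ, 0 < r → r < hFree E x R → hFree E x R ≤ R →
      (volume (thickening r E ∩ ball x R)).toReal ≤
        C * (hFree E x R / r) ^ (-β) * (volume (ball x R)).toReal)
    {x : EuclideanSpace ℝ (Fin n)} (hx : x ∈ E) {R : ℝ} (hR : 0 < R)
    (hhpos : 0 < hFree E x R) :
    ((n : ℝ) - β) ∈ {l : ℝ | 0 ≤ l ∧ ∃ C : ℝ, ∀ r : ℝ, 0 < r → r < diam (E ∩ ball x R) →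
      (volume (thickening r (E ∩ ball x R))).toReal ≤ C * r ^ ((n : ℝ) - l)} := by
  set h : ℝ := hFree E x R with hh'
  set h2 : ℝ := hFree E x (2 * R) with hh2
  have hhR : h ≤ R := hFree_le hx hR
  have hhh2 : h ≤ h2 := hFree_mono hx hR (by linarith)
  have hh2R : h2 ≤ 2 * R := hFree_le hx (by linarith)
  have hh2pos : 0 < h2 := lt_of_lt_of_le hhpos hhh2
  set V2 : ℝ := (volume (ball x (2 * R))).toReal with hV2
  set V3 : ℝ := (volume (ball x (3 * R))).toReal with hV3
  have hV2nn : 0 ≤ V2 := ENNReal.toReal_nonneg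
  have hV3nn : 0 ≤ V3 := ENNReal.toReal_nonneg
  set C' : ℝ := max (C * h2 ^ (-β) * V2) 0 + V3 * h ^ (-β) with hC'
  refine ⟨by linarith, C', fun r hr hrd => ?_⟩
  have hexp : (n : ℝ) - ((n : ℝ) - β) = β := by ring
  rw [hexp]
  have hrb : (0 : ℝ) ≤ r ^ β := (Real.rpow_pos_of_pos hr β).le
  have hterm2 : 0 ≤ V3 * h ^ (-β) := mul_nonneg hV3nn (Real.rpow_pos_of_pos hhpos _).le
  have hdiam : diam (E ∩ ball x R) ≤ 2 * R :=
    (diam_mono inter_subset_right isBounded_ball).trans (diam_ball hR.le)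
  rcases lt_or_ge r h with hcase | hcase
  · -- small r: use the Muckenhoupt inequality at radius 2R
    have hsub : thickening r (E ∩ ball x R) ⊆ thickening r E ∩ ball x (2 * R) := by
      intro z hz
      obtain ⟨y, hy, hzy⟩ := mem_thickening_iff.mp hz
      refine ⟨mem_thickening_iff.mpr ⟨y, hy.1, hzy⟩, ?_⟩
      have : dist z x ≤ dist z y + dist y x := dist_triangle z y x
      have hyx : dist y x < R := mem_ball.mp hy.2
      have : dist z x < r + R := by linarith
      exact mem_ball.mpr (by linarith)
    have h2' : (volume (thickening r (E ∩ ball x R))).toReal ≤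
        (volume (thickening r E ∩ ball x (2 * R))).toReal := by
      refine ENNReal.toReal_mono ?_ (measure_mono hsub)
      exact ((measure_mono inter_subset_right).trans_lt measure_ball_lt_top).ne
    have h3 : (volume (thickening r E ∩ ball x (2 * R))).toReal ≤
        C * (h2 / r) ^ (-β) * V2 :=
      hC x hx (2 * R) r hr (hcase.trans_le hhh2) hh2R
    have h4 : C * (h2 / r) ^ (-β) * V2 = (C * h2 ^ (-β) * V2) * r ^ β := by
      rw [div_rpow_neg_eq hh2pos hr]; ring
    have hmax : C * h2 ^ (-β) * V2 ≤ max (C * h2 ^ (-β) * V2) 0 := le_max_left _ _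
    calc (volume (thickening r (E ∩ ball x R))).toReal
        ≤ (C * h2 ^ (-β) * V2) * r ^ β := by rw [← h4]; exact h2'.trans h3
      _ ≤ C' * r ^ β := by rw [hC']; nlinarith
  · -- large r: trivial volume bound
    have hr2R : r < 2 * R := lt_of_lt_of_le hrd hdiam
    have hsub : thickening r (E ∩ ball x R) ⊆ ball x (3 * R) := by
      intro z hz
      obtain ⟨y, hy, hzy⟩ := mem_thickening_iff.mp hz
      have hyx : dist y x < R := mem_ball.mp hy.2
      have : dist z x ≤ dist z y + dist y x := dist_triangle z y x
      exact mem_ball.mpr (by linarith)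
    have h2' : (volume (thickening r (E ∩ ball x R))).toReal ≤ V3 := by
      refine ENNReal.toReal_mono measure_ball_lt_top.ne (measure_mono hsub)
    have hhb : h ^ β ≤ r ^ β := Real.rpow_le_rpow hhpos.le hcase hβ.le
    have hcancel : h ^ (-β) * h ^ β = 1 := by
      rw [← Real.rpow_add hhpos]; simp
    have h3 : V3 ≤ V3 * h ^ (-β) * r ^ β := by
      have h5 : 0 < h ^ (-β) := Real.rpow_pos_of_pos hhpos _
      nlinarith
    have hmax : (0:ℝ) ≤ max (C * h2 ^ (-β) * V2) 0 := le_max_right _ _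
    calc (volume (thickening r (E ∩ ball x R))).toReal ≤ V3 * h ^ (-β) * r ^ β :=
          h2'.trans h3
      _ ≤ C' * r ^ β := by rw [hC']; nlinarith

end Aux

/-- If `E ⊆ ℝⁿ` is bounded, weakly porous and `0 < α < Mu(E)`, then for all
`x ∈ E` and `R > 0`, the upper Minkowski dimension of `E ∩ B(x,R)` is at most `n - α`;
in particular it is at most `n - Mu(E) < n`. -/
theorem upperMinkDim_le_of_weaklyPorous {n : ℕ} (E : Set (EuclideanSpace ℝ (Fin n)))
    (hb : Bornology.IsBounded E) (hwp : WeaklyPorous E)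
    (α : ℝ) (h0 : 0 < α) (h1 : α < MuckExp E) :
    ∀ x ∈ E, ∀ R : ℝ, 0 < R →
      upperMinkDim (E ∩ ball x R) ≤ (n : ℝ) - α ∧
      upperMinkDim (E ∩ ball x R) ≤ (n : ℝ) - MuckExp E ∧
      (n : ℝ) - MuckExp E < n := by
  classical
  by_cases hcond : ∀ x ∈ E, ∀ R : ℝ, 0 < R → 0 < hFree E x R
  swap
  · have : MuckExp E = 0 := by unfold MuckExp; rw [if_neg hcond]
    rw [this] at h1; linarith
  have hexp : MuckExp E = sSup (MuckSet E) := by unfold MuckExp; rw [if_pos hcond]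
  intro x hx R hR
  have hne : (MuckSet E).Nonempty := ⟨0, zero_mem_MuckSet⟩
  have hbdd : BddAbove (MuckSet E) := by
    by_contra hb'
    have : MuckExp E = 0 := by rw [hexp]; exact Real.sSup_of_not_bddAbove hb'
    rw [this] at h1; linarith
  have hM1 : α < sSup (MuckSet E) := by rw [← hexp]; exact h1
  -- a positive element above α
  obtain ⟨β₀, hβ₀mem, hβ₀⟩ := exists_lt_of_lt_csSup hne hM1
  have hβ₀pos : 0 < β₀ := h0.trans hβ₀
  have hh1 : 0 < hFree E x 1 := hcond x hx 1 one_pos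
  -- key: dimension bound for each positive Muckenhoupt exponent
  have key : ∀ β ∈ MuckSet E, 0 < β →
      upperMinkDim (E ∩ ball x R) ≤ (n : ℝ) - β := by
    intro β hβmem hβ
    have hβn : β ≤ n := MuckSet_le_dim hx hh1 hβ hβmem
    obtain ⟨C, hC⟩ := hβmem
    refine csInf_le ⟨0, fun l hl => hl.1⟩ ?_
    exact key_mem hβ hβn hC hx hR (hcond x hx R hR)
  have hdim0 : upperMinkDim (E ∩ ball x R) ≤ (n : ℝ) - β₀ := key β₀ hβ₀mem hβ₀pos
  have hsup : sSup (MuckSet E) ≤ (n : ℝ) - upperMinkDim (E ∩ ball x R) := by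
    refine csSup_le hne fun β hβmem => ?_
    rcases le_or_gt β 0 with hβ | hβ
    · have hn : β₀ ≤ n := MuckSet_le_dim hx hh1 hβ₀pos hβ₀mem
      linarith
    · have := key β hβmem hβ
      linarith
  refine ⟨?_, ?_, ?_⟩
  · rw [hexp] at *; linarith
  · rw [hexp] at *; linarith
  · rw [hexp] at *; linarith
end
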